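/- Let M be a positive integer and f : ℤ → ℂ an M-periodic function. (i) If f is even (f(-n) = f(n) for all n), then L(0, f) = -f(0)/2 and L(-ν, f) = 0 for every even integer ν ≥ 2. (ii) If f is odd (f(-n) = -f(n) for all n), then L(-ν, f) = 0 for every odd integer ν ≥ 1. -/

import Mathlib

open Polynomial in
lemma bern_refl (n : ℕ) :
    (Polynomial.bernoulli n).comp (1 - Polynomial.X) = (-1 : ℚ[X]) ^ n * Polynomial.bernoulli n := by
  have key : ∀ k : ℕ, _root_.bernoulli' k = (-1 : ℚ) ^ k * _root_.bernoulli k := by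
    intro k
    rcases eq_or_ne k 1 with rfl | hk
    · rw [bernoulli'_one, _root_.bernoulli_one]; norm_num
    · rw [bernoulli_eq_bernoulli'_of_ne_one hk]
      rcases Nat.even_or_odd k with he | ho
      · rw [he.neg_one_pow, one_mul]
      · rcases eq_or_ne k 1 with rfl | h1; · exact absurd rfl hk
        have : 1 < k := by
          rcases Nat.lt_or_ge k 2 with h | h
          · interval_cases k
            · exact absurd ho (by simp)
            · exact absurd rfl hk
          · exact h
        rw [bernoulli'_eq_zero_of_odd ho this, mul_zero]
  induction n with
  | zero => simp
  | succ n ih =>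
    set p : ℚ[X] := (Polynomial.bernoulli (n+1)).comp (1 - Polynomial.X)
      - (-1 : ℚ[X]) ^ (n+1) * Polynomial.bernoulli (n+1) with hp
    have h1 : Polynomial.derivative ((Polynomial.bernoulli (n+1)).comp (1 - Polynomial.X))
        = (-1 : ℚ[X])^(n+1) * ((n : ℚ[X])+1) * Polynomial.bernoulli n := by
      rw [Polynomial.derivative_comp, derivative_bernoulli_add_one, Polynomial.mul_comp, ih]
      push_cast
      simp only [Polynomial.derivative_sub, Polynomial.derivative_one, Polynomial.derivative_X,
        Polynomial.natCast_comp, Polynomial.add_comp, Polynomial.one_comp, Polynomial.natCast_comp]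
      ring
    have hd : Polynomial.derivative p = 0 := by
      rw [hp, derivative_sub, h1, derivative_mul, derivative_pow, derivative_bernoulli_add_one]
      push_cast
      ring_nf
      simp
    have hC := Polynomial.eq_C_of_derivative_eq_zero hd
    have he1 : p.eval 1 = 0 := by
      rw [hp]
      simp only [Polynomial.eval_sub, Polynomial.eval_comp, Polynomial.eval_mul,
        Polynomial.eval_pow, Polynomial.eval_one, Polynomial.eval_sub, Polynomial.eval_X,
        Polynomial.eval_neg, Polynomial.eval_one]
      rw [sub_self, Polynomial.bernoulli_eval_zero, Polynomial.bernoulli_eval_one, key,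
        ← mul_assoc, ← pow_add, Even.neg_one_pow ⟨n+1, by ring⟩, one_mul, sub_self]
    have : p = 0 := by
      rw [hC] at he1 ⊢
      rw [Polynomial.eval_C] at he1
      rw [he1, map_zero]
    have := sub_eq_zero.mp (hp ▸ this)
    linear_combination this

lemma bern_refl_eval (n : ℕ) (x : ℚ) :
    (Polynomial.bernoulli n).eval (1 - x) = (-1) ^ n * (Polynomial.bernoulli n).eval x := by
  have := congrArg (Polynomial.eval x) (bern_refl n)
  simpa [Polynomial.eval_comp] using this

lemma key_sum (M : ℕ) (hM : 0 < M) (f : ℤ → ℂ) (hf : ∀ n : ℤ, f (n + M) = f n)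
    (k : ℕ) (ε : ℂ) (hsym : ∀ n : ℤ, f (-n) = ε * f n) (hsign : (-1 : ℂ) ^ k * ε = -1) :
    2 * (∑ ℓ ∈ Finset.Icc 1 M, f ℓ * (((Polynomial.bernoulli k).eval ((ℓ : ℚ) / M) : ℚ) : ℂ))
      = f 0 * (((bernoulli' k - _root_.bernoulli k : ℚ)) : ℂ) := by
  have hM0 : (M : ℚ) ≠ 0 := Nat.cast_ne_zero.mpr hM.ne'
  set g : ℕ → ℂ := fun j => f j * (((Polynomial.bernoulli k).eval ((j : ℚ) / M) : ℚ) : ℂ) with hg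
  have hS1 : (∑ ℓ ∈ Finset.Icc 1 M, f ℓ * (((Polynomial.bernoulli k).eval ((ℓ : ℚ) / M) : ℚ) : ℂ))
      = ∑ j ∈ Finset.range M, g (1 + j) := by
    rw [← Finset.Ico_add_one_right_eq_Icc, Finset.sum_Ico_eq_sum_range]
    simp [hg]
  have hS2 : ∑ j ∈ Finset.range M, g (1 + j) = ∑ j ∈ Finset.range M, g (M - j) := by
    rw [← Finset.sum_range_reflect]
    refine Finset.sum_congr rfl fun j hj => ?_
    rw [Finset.mem_range] at hj
    congr 1
    omega
  have hS3 : ∀ j ∈ Finset.range M, g (M - j) = (-1 : ℂ) ^ k * ε * g j := by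
    intro j hj
    rw [Finset.mem_range] at hj
    have hle : j ≤ M := hj.le
    have hfval : f ((M - j : ℕ) : ℤ) = ε * f j := by
      have h1 : ((M - j : ℕ) : ℤ) = -(j : ℤ) + M := by omega
      rw [h1, hf, hsym]
    have hq : (((M - j : ℕ) : ℚ)) / M = 1 - (j : ℚ) / M := by
      rw [Nat.cast_sub hle]
      field_simp
    rw [hg]
    simp only
    rw [hfval, hq, bern_refl_eval]
    push_cast
    ring
  have hS3' : ∑ j ∈ Finset.range M, g (M - j) = (-1 : ℂ) ^ k * ε * ∑ j ∈ Finset.range M, g j := by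
    rw [Finset.mul_sum]
    exact Finset.sum_congr rfl hS3
  have hS4 : ∑ j ∈ Finset.range M, g (1 + j)
      = (∑ j ∈ Finset.range M, g j) + g M - g 0 := by
    have h1 := Finset.sum_range_succ' g M
    have h2 := Finset.sum_range_succ g M
    rw [h2] at h1
    have h3 : ∑ j ∈ Finset.range M, g (1 + j) = ∑ j ∈ Finset.range M, g (j + 1) := by
      simp [add_comm]
    rw [h3]
    exact eq_sub_of_add_eq h1.symm
  have hgM : g M = f 0 * ((bernoulli' k : ℚ) : ℂ) := by
    have hfM : f (M : ℤ) = f 0 := by simpa using hf 0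
    rw [hg]
    simp only
    rw [div_self hM0, Polynomial.bernoulli_eval_one, hfM]
  have hg0 : g 0 = f 0 * ((_root_.bernoulli k : ℚ) : ℂ) := by
    rw [hg]
    simp only [Nat.cast_zero, zero_div, Polynomial.bernoulli_eval_zero, Int.cast_zero]
  have e1 := hS1
  rw [hS2, hS3', hsign] at e1
  rw [hS4, hgM, hg0] at hS1
  push_cast
  linear_combination e1 + hS1


open Complex

/-- `L(-m, g)` for a `P`-periodic `g`, via Bernoulli polynomials:
`L(-m, g) = -(P^m/(m+1)) Σ_{ℓ=1}^P g(ℓ) B_{m+1}(ℓ/P)`. -/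
noncomputable def Lval (P : ℕ) (g : ℤ → ℂ) (m : ℕ) : ℂ :=
  -((P : ℂ) ^ m / (m + 1)) * ∑ ℓ ∈ Finset.Icc 1 P,
    g ℓ * (((Polynomial.bernoulli (m + 1)).eval ((ℓ : ℚ) / P) : ℚ) : ℂ)

/-- For an `M`-periodic `f : ℤ → ℂ`:
(i) if `f` is even then `L(0,f) = -f(0)/2` and `L(-ν,f) = 0` for every even `ν ≥ 2`;
(ii) if `f` is odd then `L(-ν,f) = 0` for every odd `ν ≥ 1`. -/
theorem statement8 (M : ℕ) (hM : 0 < M) (f : ℤ → ℂ)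
    (hf : ∀ n : ℤ, f (n + M) = f n) :
    ((∀ n : ℤ, f (-n) = f n) →
      Lval M f 0 = -f 0 / 2 ∧ ∀ ν : ℕ, 2 ≤ ν → Even ν → Lval M f ν = 0) ∧
    ((∀ n : ℤ, f (-n) = -f n) →
      ∀ ν : ℕ, 1 ≤ ν → Odd ν → Lval M f ν = 0) := by
  constructor
  · intro hev
    have hsym : ∀ n : ℤ, f (-n) = (1 : ℂ) * f n := fun n => by rw [one_mul]; exact hev n
    constructor
    · have h := key_sum M hM f hf 1 1 hsym (by norm_num)
      rw [bernoulli'_one, bernoulli_one] at h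
      push_cast at h
      rw [Lval]
      push_cast
      linear_combination (-1/2 : ℂ) * h
    · intro ν hν2 hνeven
      have h := key_sum M hM f hf (ν + 1) 1 hsym
        (by rw [Odd.neg_one_pow (Even.add_one hνeven)]; ring)
      have hb' : bernoulli' (ν + 1) = 0 :=
        bernoulli'_eq_zero_of_odd (Even.add_one hνeven) (by omega)
      have hb : _root_.bernoulli (ν + 1) = bernoulli' (ν + 1) :=
        bernoulli_eq_bernoulli'_of_ne_one (by omega)
      rw [hb, hb'] at h
      have hS : (∑ ℓ ∈ Finset.Icc 1 M,
          f ℓ * (((Polynomial.bernoulli (ν + 1)).eval ((ℓ : ℚ) / M) : ℚ) : ℂ)) = 0 := by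
        push_cast at h
        linear_combination h / 2
      rw [Lval, hS, mul_zero]
  · intro hodd ν hν1 hνodd
    have hsym : ∀ n : ℤ, f (-n) = (-1 : ℂ) * f n := fun n => by
      rw [neg_one_mul]; exact hodd n
    have hf0 : f 0 = 0 := by
      have h0 := hodd 0
      rw [neg_zero] at h0
      linear_combination h0 / 2
    have h := key_sum M hM f hf (ν + 1) (-1) hsym
      (by rw [Even.neg_one_pow (Odd.add_one hνodd)]; ring)
    rw [hf0, zero_mul] at h
    have hS : (∑ ℓ ∈ Finset.Icc 1 M,
        f ℓ * (((Polynomial.bernoulli (ν + 1)).eval ((ℓ : ℚ) / M) : ℚ) : ℂ)) = 0 := by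
      linear_combination h / 2
    rw [Lval, hS, mul_zero]
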